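/- A two-dimensional normed plane is a Radon plane (Birkhoff orthogonality is symmetric) if and only if its anti-norm is a positive scalar multiple of its norm. -/

import Mathlib

/-- Birkhoff orthogonality: `v ⊣_B w`. -/
def Birkhoff {X : Type*} [NormedAddCommGroup X] [NormedSpace ℝ X] (v w : X) : Prop :=
  ∀ l : ℝ, ‖v‖ ≤ ‖v + l • w‖

noncomputable def antinorm {X : Type*} [NormedAddCommGroup X] [NormedSpace ℝ X]
    (ω : X →ₗ[ℝ] X →ₗ[ℝ] ℝ) (y : X) : ℝ :=
  sSup ((fun x => ω x y) '' {x : X | ‖x‖ ≤ 1})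

open Real Set Filter Topology

namespace RadonAux

variable {X : Type*} [NormedAddCommGroup X] [NormedSpace ℝ X]

lemma skew (ω : X →ₗ[ℝ] X →ₗ[ℝ] ℝ) (halt : ∀ x : X, ω x x = 0) (x y : X) :
    ω x y = - ω y x := by
  have h := halt (x + y)
  simp only [map_add, LinearMap.add_apply, halt] at h
  linarith

noncomputable def phi [FiniteDimensional ℝ X] (ω : X →ₗ[ℝ] X →ₗ[ℝ] ℝ) (y : X) : X →L[ℝ] ℝ :=
  LinearMap.toContinuousLinearMap (ω.flip y)

lemma phi_apply [FiniteDimensional ℝ X] (ω : X →ₗ[ℝ] X →ₗ[ℝ] ℝ) (y x : X) :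
    phi ω y x = ω x y := rfl

lemma antinorm_eq_opNorm [FiniteDimensional ℝ X] (ω : X →ₗ[ℝ] X →ₗ[ℝ] ℝ) (y : X) :
    antinorm ω y = ‖phi ω y‖ := by
  have h0 : (0:ℝ) ∈ (fun x => ω x y) '' {x : X | ‖x‖ ≤ 1} :=
    ⟨0, by simp, by simp⟩
  have hbdd : BddAbove ((fun x => ω x y) '' {x : X | ‖x‖ ≤ 1}) := by
    refine ⟨‖phi ω y‖, ?_⟩
    rintro a ⟨x, hx, rfl⟩
    calc ω x y ≤ |ω x y| := le_abs_self _
      _ = ‖phi ω y x‖ := by rw [phi_apply, Real.norm_eq_abs]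
      _ ≤ ‖phi ω y‖ * ‖x‖ := (phi ω y).le_opNorm x
      _ ≤ ‖phi ω y‖ * 1 := by
          exact mul_le_mul_of_nonneg_left hx (norm_nonneg _)
      _ = ‖phi ω y‖ := mul_one _
  have hnonneg : (0:ℝ) ≤ sSup ((fun x => ω x y) '' {x : X | ‖x‖ ≤ 1}) :=
    le_csSup hbdd h0
  refine le_antisymm ?_ ?_
  · refine csSup_le ⟨0, h0⟩ ?_
    rintro a ⟨x, hx, rfl⟩
    calc ω x y ≤ |ω x y| := le_abs_self _
      _ = ‖phi ω y x‖ := by rw [phi_apply, Real.norm_eq_abs]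
      _ ≤ ‖phi ω y‖ * ‖x‖ := (phi ω y).le_opNorm x
      _ ≤ ‖phi ω y‖ * 1 := mul_le_mul_of_nonneg_left hx (norm_nonneg _)
      _ = ‖phi ω y‖ := mul_one _
  · refine ContinuousLinearMap.opNorm_le_bound _ hnonneg ?_
    intro x
    rcases eq_or_ne x 0 with rfl | hx
    · simp
    · have hxpos : 0 < ‖x‖ := norm_pos_iff.2 hx
      set S := sSup ((fun x => ω x y) '' {x : X | ‖x‖ ≤ 1}) with hS
      have h1 : ω (‖x‖⁻¹ • x) y ≤ S :=
        le_csSup hbdd ⟨‖x‖⁻¹ • x, by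
          simp [norm_smul, abs_of_nonneg (inv_nonneg.2 hxpos.le),
            inv_mul_cancel₀ hxpos.ne'], rfl⟩
      have h2 : ω (-(‖x‖⁻¹ • x)) y ≤ S :=
        le_csSup hbdd ⟨-(‖x‖⁻¹ • x), by
          simp [norm_smul, abs_of_nonneg (inv_nonneg.2 hxpos.le),
            inv_mul_cancel₀ hxpos.ne'], rfl⟩
      have h3 : ω (‖x‖⁻¹ • x) y = ‖x‖⁻¹ * ω x y := by
        simp [map_smul]
      have h4 : |‖x‖⁻¹ * ω x y| ≤ S := by
        rw [abs_le]
        constructor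
        · have := h2
          rw [map_neg, LinearMap.neg_apply, h3] at this
          · linarith
        · rw [← h3]; exact h1
      have : |ω x y| ≤ S * ‖x‖ := by
        rw [abs_mul, abs_of_nonneg (inv_nonneg.2 hxpos.le)] at h4
        calc |ω x y| = ‖x‖ * (‖x‖⁻¹ * |ω x y|) := by
              field_simp
          _ ≤ ‖x‖ * S := mul_le_mul_of_nonneg_left h4 hxpos.le
          _ = S * ‖x‖ := mul_comm _ _
      exact this

lemma antinorm_smul [FiniteDimensional ℝ X] (ω : X →ₗ[ℝ] X →ₗ[ℝ] ℝ) (c : ℝ) (y : X) :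
    antinorm ω (c • y) = |c| * antinorm ω y := by
  have : phi ω (c • y) = c • phi ω y := by
    ext x; simp [phi_apply, map_smul]
  rw [antinorm_eq_opNorm, antinorm_eq_opNorm, this]
  rw [show ‖c • phi ω y‖ = ‖c‖ * ‖phi ω y‖ from norm_smul c (phi ω y), Real.norm_eq_abs]

lemma antinorm_zero [FiniteDimensional ℝ X] (ω : X →ₗ[ℝ] X →ₗ[ℝ] ℝ) :
    antinorm ω 0 = 0 := by
  have : phi ω (0:X) = 0 := by ext x; simp [phi_apply]
  rw [antinorm_eq_opNorm, this, norm_zero]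

lemma abs_omega_le [FiniteDimensional ℝ X] (ω : X →ₗ[ℝ] X →ₗ[ℝ] ℝ) (x y : X) :
    |ω x y| ≤ ‖x‖ * antinorm ω y := by
  rw [antinorm_eq_opNorm]
  calc |ω x y| = ‖phi ω y x‖ := by rw [phi_apply, Real.norm_eq_abs]
    _ ≤ ‖phi ω y‖ * ‖x‖ := (phi ω y).le_opNorm x
    _ = ‖x‖ * ‖phi ω y‖ := mul_comm _ _

lemma antinorm_pos [FiniteDimensional ℝ X] (ω : X →ₗ[ℝ] X →ₗ[ℝ] ℝ)
    (halt : ∀ x : X, ω x x = 0) (hnd : ∀ x : X, (∀ y : X, ω x y = 0) → x = 0)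
    {y : X} (hy : y ≠ 0) : 0 < antinorm ω y := by
  rw [antinorm_eq_opNorm]
  have : phi ω y ≠ 0 := by
    intro h
    apply hy
    apply hnd
    intro z
    have hz : ω z y = 0 := by
      have := congrArg (fun f => (f : X →L[ℝ] ℝ) z) h
      simpa [phi_apply] using this
    rw [skew ω halt y z]
    have hz' : ω z y = 0 := hz
    -- need ω y z = 0 : from skew, ω y z = -ω z y = 0
    simp [skew ω halt z y] at hz' ⊢
    linarith [hz]
  exact norm_pos_iff.2 this

lemma antinorm_continuous [FiniteDimensional ℝ X] (ω : X →ₗ[ℝ] X →ₗ[ℝ] ℝ) :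
    Continuous (antinorm ω) := by
  have : Continuous fun y : X => ‖phi ω y‖ := by
    have h1 : Continuous fun y : X => (phi ω y : X →L[ℝ] ℝ) := by
      have : IsLinearMap ℝ fun y : X => (phi ω y : X →L[ℝ] ℝ) := by
        constructor
        · intro a b; ext x; simp [phi_apply, map_add]
        · intro c a; ext x; simp [phi_apply, map_smul]
      exact LinearMap.continuous_of_finiteDimensional (this.mk' _)
    exact h1.norm
  have heq : antinorm ω = fun y => ‖phi ω y‖ := by
    funext y; exact antinorm_eq_opNorm ω y
  rw [heq]; exact this


lemma birkhoff_smul_right {v w : X} (s : ℝ) (hs : s ≠ 0) (h : Birkhoff v w) :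
    Birkhoff v (s • w) := by
  intro l
  have := h (l * s)
  simpa [smul_smul, mul_comm] using this

lemma birkhoff_not_self {v : X} (hv : v ≠ 0) {c : ℝ} (hc : c ≠ 0) :
    ¬ Birkhoff v (c • v) := by
  intro h
  have := h (-c⁻¹)
  rw [smul_smul] at this
  simp [hc] at this
  exact hv this

lemma birkhoff_of_eq [FiniteDimensional ℝ X] (ω : X →ₗ[ℝ] X →ₗ[ℝ] ℝ)
    (halt : ∀ x : X, ω x x = 0) (hnd : ∀ x : X, (∀ y : X, ω x y = 0) → x = 0)
    {v w : X} (hw : w ≠ 0) (h : |ω v w| = ‖v‖ * antinorm ω w) : Birkhoff v w := by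
  intro l
  have hpos := antinorm_pos ω halt hnd hw
  have heq : ω (v + l • w) w = ω v w := by
    simp [map_add, map_smul, halt w]
  have : ‖v‖ * antinorm ω w ≤ ‖v + l • w‖ * antinorm ω w := by
    calc ‖v‖ * antinorm ω w = |ω (v + l • w) w| := by rw [heq, ← h]
      _ ≤ ‖v + l • w‖ * antinorm ω w := abs_omega_le ω _ w
  exact le_of_mul_le_mul_right this hpos

lemma eq_of_birkhoff [FiniteDimensional ℝ X] (hdim : Module.finrank ℝ X = 2)
    (ω : X →ₗ[ℝ] X →ₗ[ℝ] ℝ)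
    (halt : ∀ x : X, ω x x = 0) (hnd : ∀ x : X, (∀ y : X, ω x y = 0) → x = 0)
    {v w : X} (hB : Birkhoff v w) : |ω v w| = ‖v‖ * antinorm ω w := by
  rcases eq_or_ne w 0 with rfl | hw
  · simp [antinorm_zero]
  rcases eq_or_ne v 0 with rfl | hv
  · simp
  have hvpos : (0:ℝ) < ‖v‖ := norm_pos_iff.2 hv
  -- separation
  set s : Set X := Metric.ball (0:X) ‖v‖ with hsdef
  set t : Set X := Set.range (fun l : ℝ => v + l • w) with htdef
  have hconv_s : Convex ℝ s := convex_ball 0 _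
  have hopen_s : IsOpen s := Metric.isOpen_ball
  have hconv_t : Convex ℝ t := by
    rintro x ⟨l1, rfl⟩ y ⟨l2, rfl⟩ a c ha hc hac
    refine ⟨a * l1 + c * l2, ?_⟩
    match_scalars
    · linarith
    · ring
  have hdisj : Disjoint s t := by
    rw [Set.disjoint_left]
    rintro x hx ⟨l, rfl⟩
    rw [hsdef, mem_ball_zero_iff] at hx
    exact absurd hx (hB l).not_gt
  obtain ⟨f, u, hfs, hft⟩ := geometric_hahn_banach_open hconv_s hopen_s hconv_t hdisj
  have h0s : (0:X) ∈ s := by rw [hsdef, mem_ball_zero_iff]; simpa using hvpos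
  have hu0 : 0 < u := by have := hfs 0 h0s; simpa using this
  have hfw : f w = 0 := by
    by_contra hfw
    have h1 : u ≤ f (v + ((u - 1 - f v) / f w) • w) := hft _ ⟨_, rfl⟩
    rw [map_add, map_smul, smul_eq_mul, div_mul_cancel₀ _ hfw] at h1
    linarith
  have hfv : u ≤ f v := hft v ⟨0, by simp⟩
  -- key bound : ∀ x, f x * ‖v‖ ≤ u * ‖x‖
  have key : ∀ x : X, f x * ‖v‖ ≤ u * ‖x‖ := by
    intro x
    rcases eq_or_ne x 0 with rfl | hx
    · simp
    have hxpos : 0 < ‖x‖ := norm_pos_iff.2 hx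
    rcases le_or_gt (f x) 0 with hfx | hfx
    · calc f x * ‖v‖ ≤ 0 := mul_nonpos_of_nonpos_of_nonneg hfx (norm_nonneg _)
        _ ≤ u * ‖x‖ := by positivity
    · have hr : ∀ r : ℝ, 0 < r → r < ‖v‖ → f x * r ≤ u * ‖x‖ := by
        intro r hr0 hrv
        have hmem : (r / ‖x‖) • x ∈ s := by
          rw [hsdef, mem_ball_zero_iff, norm_smul, Real.norm_eq_abs,
            abs_of_pos (by positivity), div_mul_cancel₀ _ hxpos.ne']
          exact hrv
        have h0 := hfs _ hmem
        rw [map_smul, smul_eq_mul] at h0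
        have h3 : r / ‖x‖ * f x * ‖x‖ < u * ‖x‖ :=
          mul_lt_mul_of_pos_right h0 hxpos
        have : f x * r < u * ‖x‖ := by
          calc f x * r = r / ‖x‖ * f x * ‖x‖ := by field_simp
            _ < u * ‖x‖ := h3
        exact this.le
      have h5 : ‖v‖ ≤ u * ‖x‖ / f x := by
        by_contra h6
        push_neg at h6
        set m := (u * ‖x‖ / f x + ‖v‖) / 2 with hmdef
        set r := max m (‖v‖ / 2) with hrdef
        have hm1 : u * ‖x‖ / f x < m := by rw [hmdef]; linarith
        have hm2 : m < ‖v‖ := by rw [hmdef]; linarith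
        have hrlt : r < ‖v‖ := max_lt hm2 (by linarith)
        have hrpos : 0 < r := lt_of_lt_of_le (by linarith : (0:ℝ) < ‖v‖/2) (le_max_right _ _)
        have h7 := hr r hrpos hrlt
        have h8 : m ≤ r := le_max_left _ _
        have h9 : r ≤ u * ‖x‖ / f x := (le_div_iff₀ hfx).mpr (by linarith)
        linarith
      calc f x * ‖v‖ ≤ f x * (u * ‖x‖ / f x) := mul_le_mul_of_nonneg_left h5 hfx.le
        _ = u * ‖x‖ := by field_simp
  -- f v = u
  have hfv_le : f v ≤ u := by
    have h9 : f v * ‖v‖ ≤ u * ‖v‖ := key v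
    exact le_of_mul_le_mul_right h9 hvpos
  have hfveq : f v = u := le_antisymm hfv_le hfv
  -- linear independence of v, w
  have hli : LinearIndependent ℝ ![v, w] := by
    rw [linearIndependent_fin2]
    refine ⟨by simpa using hw, ?_⟩
    intro a hav
    simp only [Matrix.cons_val_one, Matrix.head_cons, Matrix.cons_val_zero] at hav
    have ha : a ≠ 0 := by
      rintro rfl; rw [zero_smul] at hav; exact hv hav.symm
    apply birkhoff_not_self hv (c := a⁻¹) (inv_ne_zero ha)
    have hwv : w = a⁻¹ • v := by
      rw [← hav, smul_smul, inv_mul_cancel₀ ha, one_smul]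
    rwa [← hwv]
  have hcard : Fintype.card (Fin 2) = Module.finrank ℝ X := by simp [hdim]
  set B := basisOfLinearIndependentOfCardEqFinrank hli hcard with hBdef
  have hcoe : ⇑B = ![v, w] := by
    rw [hBdef, coe_basisOfLinearIndependentOfCardEqFinrank]
  have hB0 : B 0 = v := by rw [hcoe]; rfl
  have hB1 : B 1 = w := by rw [hcoe]; rfl
  have hspan : ∀ x : X, ∃ a c : ℝ, x = a • v + c • w := by
    intro x
    have h1 := B.sum_repr x
    rw [Fin.sum_univ_two, hB0, hB1] at h1
    exact ⟨_, _, h1.symm⟩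
  -- ω v w ≠ 0
  have hωvw : ω v w ≠ 0 := by
    intro hzero
    apply hw
    apply hnd
    intro y
    have h1 : ω y w = 0 := by
      obtain ⟨a, c, rfl⟩ := hspan y
      simp only [map_add, map_smul, LinearMap.add_apply, LinearMap.smul_apply,
        smul_eq_mul, hzero, halt w]
      ring
    rw [skew ω halt w y, h1, neg_zero]
  set T : ℝ := u / ω v w with hTdef
  have hT : T ≠ 0 := div_ne_zero hu0.ne' hωvw
  have hTv : T * ω v w = u := div_mul_cancel₀ _ hωvw
  have hprop : ∀ x : X, f x = T * ω x w := by
    intro x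
    obtain ⟨a, c, rfl⟩ := hspan x
    simp only [map_add, map_smul, LinearMap.add_apply, LinearMap.smul_apply,
      smul_eq_mul, hfveq, hfw, halt w]
    rw [← hTv]
    ring
  -- norm of f
  have hfCLM : f = T • phi ω w := by
    apply ContinuousLinearMap.ext
    intro x
    rw [hprop x]
    simp [phi_apply]
  have hfnorm : ‖f‖ = |T| * antinorm ω w := by
    rw [hfCLM, antinorm_eq_opNorm]
    rw [show ‖T • phi ω w‖ = ‖T‖ * ‖phi ω w‖ from norm_smul T (phi ω w), Real.norm_eq_abs]
  have hfle : ‖f‖ ≤ u / ‖v‖ := by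
    apply ContinuousLinearMap.opNorm_le_bound _ (by positivity)
    intro x
    rw [Real.norm_eq_abs, abs_le]
    have k1 := key x
    have k2 := key (-x)
    rw [map_neg, norm_neg] at k2
    constructor
    · rw [neg_le, div_mul_eq_mul_div, le_div_iff₀ hvpos]
      linarith
    · rw [div_mul_eq_mul_div, le_div_iff₀ hvpos]
      linarith
  have hfge : u ≤ ‖f‖ * ‖v‖ := by
    rw [← hfveq]
    calc f v ≤ |f v| := le_abs_self _
      _ = ‖f v‖ := (Real.norm_eq_abs _).symm
      _ ≤ ‖f‖ * ‖v‖ := f.le_opNorm v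
  have hfeq : ‖f‖ = u / ‖v‖ := by
    refine le_antisymm hfle ?_
    rw [div_le_iff₀ hvpos]
    linarith
  -- conclude
  have h10 : |T| * |ω v w| = u := by
    rw [← abs_mul, hTv, abs_of_pos hu0]
  have h11 : |T| * antinorm ω w = u / ‖v‖ := by
    rw [← hfnorm, hfeq]
  have hTpos : 0 < |T| := abs_pos.2 hT
  have h12 : |T| * (antinorm ω w * ‖v‖) = u := by
    rw [← mul_assoc, h11]
    field_simp
  have h13 : |T| * |ω v w| = |T| * (‖v‖ * antinorm ω w) := by
    rw [h10, ← h12]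
    ring
  exact mul_left_cancel₀ hTpos.ne' h13

lemma exists_birkhoff [FiniteDimensional ℝ X] (hdim : Module.finrank ℝ X = 2)
    {v : X} (hv : v ≠ 0) : ∃ w : X, w ≠ 0 ∧ Birkhoff v w := by
  obtain ⟨g, hg1, hgv⟩ := exists_dual_vector ℝ v (norm_ne_zero_iff.2 hv)
  have hb : Module.Basis (Fin 2) ℝ X := Module.finBasisOfFinrankEq ℝ X hdim
  set b : Module.Basis (Fin 2) ℝ X := hb with hbdef
  set w : X := g (b 1) • (b 0) - g (b 0) • (b 1) with hwdef
  have hgw : g w = 0 := by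
    simp [hwdef, map_sub, map_smul, smul_eq_mul]
    ring
  have hwne : w ≠ 0 := by
    intro h0
    have h2 : g (b 1) • (b 0) = g (b 0) • (b 1) := by
      have h1 : g (b 1) • (b 0) - g (b 0) • (b 1) = 0 := by rw [← hwdef, h0]
      rwa [sub_eq_zero] at h1
    have hli := b.linearIndependent
    rw [linearIndependent_fin2] at hli
    obtain ⟨hb1, hind⟩ := hli
    have hg1b : g (b 1) = 0 := by
      by_contra hg0
      have : b 0 = ((g (b 1))⁻¹ * g (b 0)) • (b 1) := by
        rw [← smul_smul, ← h2, smul_smul, inv_mul_cancel₀ hg0, one_smul]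
      exact hind _ this.symm
    have hg0b : g (b 0) = 0 := by
      rw [hg1b, zero_smul] at h2
      rcases (smul_eq_zero.1 h2.symm) with h | h
      · exact h
      · exact absurd h hb1
    have hg0 : g = 0 := by
      apply ContinuousLinearMap.ext
      intro x
      have hx := Module.Basis.sum_repr b x
      rw [← hx]
      rw [map_sum]
      rw [Fin.sum_univ_two]
      simp [map_smul, hg0b, hg1b]
    rw [hg0] at hgv
    simp only [ContinuousLinearMap.zero_apply] at hgv
    exact hv (norm_eq_zero.1 hgv.symm)
  refine ⟨w, hwne, ?_⟩
  intro l
  have : (‖v‖ : ℝ) = g (v + l • w) := by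
    simp [map_add, map_smul, hgw, hgv, smul_eq_mul]
  calc ‖v‖ = g (v + l • w) := this
    _ ≤ |g (v + l • w)| := le_abs_self _
    _ = ‖g (v + l • w)‖ := (Real.norm_eq_abs _).symm
    _ ≤ ‖g‖ * ‖v + l • w‖ := g.le_opNorm _
    _ = ‖v + l • w‖ := by rw [hg1, one_mul]

end RadonAux

namespace RadonCore

def Supp (f : ℝ → ℝ) (θ φ : ℝ) : Prop :=
  ∀ ψ : ℝ, f ψ * Real.sin (ψ - φ) ≤ f θ * Real.sin (θ - φ)

def Phi (f₁ f₂ : ℝ → ℝ) (θ : ℝ) : Set ℝ :=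
  {φ | φ ∈ Icc (θ - π) θ ∧ Supp f₁ θ φ ∧ Supp f₂ θ φ}

lemma supp_closed (f : ℝ → ℝ) (θ : ℝ) : IsClosed {φ : ℝ | Supp f θ φ} := by
  have h : {φ : ℝ | Supp f θ φ} =
      ⋂ ψ : ℝ, {φ : ℝ | f ψ * Real.sin (ψ - φ) ≤ f θ * Real.sin (θ - φ)} := by
    ext φ; simp [Supp, Set.mem_iInter]
  rw [h]
  refine isClosed_iInter fun ψ => isClosed_le ?_ ?_
  · exact continuous_const.mul (Real.continuous_sin.comp (continuous_const.sub continuous_id))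
  · exact continuous_const.mul (Real.continuous_sin.comp (continuous_const.sub continuous_id))

lemma phi_closed (f₁ f₂ : ℝ → ℝ) (θ : ℝ) : IsClosed (Phi f₁ f₂ θ) := by
  have : Phi f₁ f₂ θ = Icc (θ - π) θ ∩ ({φ | Supp f₁ θ φ} ∩ {φ | Supp f₂ θ φ}) := by
    ext φ; simp [Phi, mem_inter_iff, and_assoc]
  rw [this]
  exact isClosed_Icc.inter ((supp_closed f₁ θ).inter (supp_closed f₂ θ))

lemma phi_compact (f₁ f₂ : ℝ → ℝ) (θ : ℝ) : IsCompact (Phi f₁ f₂ θ) :=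
  isCompact_Icc.of_isClosed_subset (phi_closed f₁ f₂ θ) (fun _ h => h.1)

section Main

variable {f₁ f₂ : ℝ → ℝ}

lemma phi_nonempty (hex : ∀ θ : ℝ, ∃ φ ∈ Ioo (θ - π) θ, Supp f₁ θ φ ∧ Supp f₂ θ φ) (θ : ℝ) :
    (Phi f₁ f₂ θ).Nonempty := by
  obtain ⟨φ, hφ, h1, h2⟩ := hex θ
  exact ⟨φ, ⟨⟨hφ.1.le, hφ.2.le⟩, h1, h2⟩⟩

noncomputable def mphi (f₁ f₂ : ℝ → ℝ) (θ : ℝ) : ℝ := sSup (Phi f₁ f₂ θ)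

lemma mphi_mem (hex : ∀ θ : ℝ, ∃ φ ∈ Ioo (θ - π) θ, Supp f₁ θ φ ∧ Supp f₂ θ φ) (θ : ℝ) :
    mphi f₁ f₂ θ ∈ Phi f₁ f₂ θ :=
  (phi_compact f₁ f₂ θ).sSup_mem (phi_nonempty hex θ)

lemma mphi_le (hex : ∀ θ : ℝ, ∃ φ ∈ Ioo (θ - π) θ, Supp f₁ θ φ ∧ Supp f₂ θ φ)
    {θ φ : ℝ} (hφ : φ ∈ Phi f₁ f₂ θ) : φ ≤ mphi f₁ f₂ θ :=
  le_csSup (phi_compact f₁ f₂ θ).bddAbove hφ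

lemma not_supp_self (hp : ∀ x, 0 < f₁ x) (θ : ℝ) : ¬ Supp f₁ θ θ := by
  intro h
  have := h (θ + π / 2)
  rw [show θ + π/2 - θ = π/2 by ring, Real.sin_pi_div_two, sub_self, Real.sin_zero,
    mul_zero, mul_one] at this
  exact absurd this (hp _).not_ge

lemma not_supp_antipode (hp : ∀ x, 0 < f₁ x) (θ : ℝ) : ¬ Supp f₁ θ (θ - π) := by
  intro h
  have := h (θ - π / 2)
  rw [show θ - π/2 - (θ - π) = π/2 by ring, Real.sin_pi_div_two,
    show θ - (θ - π) = π by ring, Real.sin_pi, mul_zero, mul_one] at this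
  exact absurd this (hp _).not_ge

lemma mphi_mem_Ioo (hp : ∀ x, 0 < f₁ x)
    (hex : ∀ θ : ℝ, ∃ φ ∈ Ioo (θ - π) θ, Supp f₁ θ φ ∧ Supp f₂ θ φ) (θ : ℝ) :
    mphi f₁ f₂ θ ∈ Ioo (θ - π) θ := by
  obtain ⟨⟨h1, h2⟩, hs1, _⟩ := mphi_mem hex θ
  constructor
  · rcases lt_or_eq_of_le h1 with h | h
    · exact h
    · rw [← h] at hs1
      exact absurd hs1 (not_supp_antipode hp θ)
  · rcases lt_or_eq_of_le h2 with h | h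
    · exact h
    · rw [h] at hs1
      exact absurd hs1 (not_supp_self hp θ)

lemma sin_prod_identity (θ θ' φ φ' : ℝ) :
    Real.sin (θ-φ) * Real.sin (θ'-φ') - Real.sin (θ-φ') * Real.sin (θ'-φ)
      = Real.sin (θ-θ') * Real.sin (φ-φ') := by
  simp only [Real.sin_sub]
  ring

lemma supp_mono {f : ℝ → ℝ} (hp : ∀ x, 0 < f x) {θ θ' φ φ' : ℝ}
    (h1 : θ < θ') (h2 : θ' < θ + π)
    (hφ : φ ∈ Ioo (θ - π) θ) (hs : Supp f θ φ)
    (hφ' : φ' ∈ Ioo (θ' - π) θ') (hs' : Supp f θ' φ') :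
    φ ≤ φ' := by
  by_contra hlt
  push_neg at hlt
  obtain ⟨ha, hb⟩ := hφ
  obtain ⟨ha', hb'⟩ := hφ'
  have s3 : 0 < Real.sin (θ - φ) :=
    Real.sin_pos_of_pos_of_lt_pi (by linarith) (by linarith)
  have s4 : 0 < Real.sin (θ' - φ') :=
    Real.sin_pos_of_pos_of_lt_pi (by linarith) (by linarith)
  have s2 : 0 < Real.sin (θ' - φ) :=
    Real.sin_pos_of_pos_of_lt_pi (by linarith) (by linarith)
  have s1 : 0 < Real.sin (θ - φ') :=
    Real.sin_pos_of_pos_of_lt_pi (by linarith) (by linarith)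
  have h3 := hs θ'
  have h4 := hs' θ
  have hBA : Real.sin (θ-φ') * Real.sin (θ'-φ) ≤ Real.sin (θ-φ) * Real.sin (θ'-φ') := by
    nlinarith [hp θ, hp θ', mul_pos (hp θ) (hp θ')]
  have key := sin_prod_identity θ θ' φ φ'
  have s5 : 0 < Real.sin (φ - φ') :=
    Real.sin_pos_of_pos_of_lt_pi (by linarith) (by linarith)
  have s6 : Real.sin (θ - θ') < 0 := by
    have hh : 0 < Real.sin (θ' - θ) :=
      Real.sin_pos_of_pos_of_lt_pi (by linarith) (by linarith)
    rw [show θ - θ' = -(θ' - θ) by ring, Real.sin_neg]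
    linarith
  nlinarith [mul_neg_of_neg_of_pos s6 s5]


lemma mphi_mono (hp₁ : ∀ x, 0 < f₁ x)
    (hex : ∀ θ : ℝ, ∃ φ ∈ Ioo (θ - π) θ, Supp f₁ θ φ ∧ Supp f₂ θ φ)
    {θ θ' : ℝ} (h1 : θ < θ') (h2 : θ' < θ + π) :
    mphi f₁ f₂ θ ≤ mphi f₁ f₂ θ' :=
  supp_mono hp₁ h1 h2 (mphi_mem_Ioo hp₁ hex θ) (mphi_mem hex θ).2.1
    (mphi_mem_Ioo hp₁ hex θ') (mphi_mem hex θ').2.1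

lemma mphi_tendsto (hc₁ : Continuous f₁) (hc₂ : Continuous f₂)
    (hp₁ : ∀ x, 0 < f₁ x)
    (hex : ∀ θ : ℝ, ∃ φ ∈ Ioo (θ - π) θ, Supp f₁ θ φ ∧ Supp f₂ θ φ) (θ : ℝ) :
    Tendsto (mphi f₁ f₂) (𝓝[>] θ) (𝓝 (mphi f₁ f₂ θ)) := by
  have hπ := Real.pi_gt_three
  set m := mphi f₁ f₂ with hm
  set L := sInf (m '' Ioo θ (θ + 1)) with hL
  have hlb : ∀ ψ ∈ Ioo θ (θ + 1), m θ ≤ m ψ := fun ψ hψ =>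
    mphi_mono hp₁ hex hψ.1 (by linarith [hψ.2])
  have hmono : ∀ ψ ∈ Ioo θ (θ+1), ∀ ψ' ∈ Ioo θ (θ+1), ψ < ψ' → m ψ ≤ m ψ' := by
    intro ψ hψ ψ' hψ' h
    exact mphi_mono hp₁ hex h (by linarith [hψ.1, hψ'.2])
  have hbdd : BddBelow (m '' Ioo θ (θ + 1)) := by
    refine ⟨m θ, ?_⟩
    rintro a ⟨ψ, hψ, rfl⟩
    exact hlb ψ hψ
  have hne : (m '' Ioo θ (θ + 1)).Nonempty :=
    ⟨m (θ + 1/2), ⟨θ + 1/2, ⟨by linarith, by linarith⟩, rfl⟩⟩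
  have hLmθ : m θ ≤ L := by
    refine le_csInf hne ?_
    rintro a ⟨ψ, hψ, rfl⟩
    exact hlb ψ hψ
  have hLle : ∀ ψ ∈ Ioo θ (θ + 1), L ≤ m ψ := fun ψ hψ => csInf_le hbdd ⟨ψ, hψ, rfl⟩
  have ht : Tendsto m (𝓝[>] θ) (𝓝 L) := by
    rw [Metric.tendsto_nhdsWithin_nhds]
    intro ε hε
    obtain ⟨a, ⟨ψ₀, hψ₀, rfl⟩, ha⟩ := exists_lt_of_csInf_lt hne (lt_add_of_pos_right L hε)
    refine ⟨ψ₀ - θ, by linarith [hψ₀.1], ?_⟩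
    intro ψ hψ hd
    rw [Real.dist_eq] at hd
    have hψθ : θ < ψ := hψ
    have hd2 := (abs_lt.1 hd).2
    have hψ1 : ψ < ψ₀ := by linarith
    have h1 : L ≤ m ψ := hLle ψ ⟨hψθ, by linarith [hψ₀.2]⟩
    have h2 : m ψ ≤ m ψ₀ := hmono ψ ⟨hψθ, by linarith [hψ₀.2]⟩ ψ₀ hψ₀ hψ1
    rw [Real.dist_eq, abs_lt]
    constructor <;> linarith
  -- L belongs to Phi θ
  have hseqx : Tendsto (fun n : ℕ => θ + 1/(n+1)) atTop (𝓝[>] θ) := by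
    apply tendsto_nhdsWithin_of_tendsto_nhds_of_eventually_within
    · have h0 : Tendsto (fun n : ℕ => 1/((n:ℝ)+1)) atTop (𝓝 0) :=
        tendsto_one_div_add_atTop_nhds_zero_nat
      have := h0.const_add θ
      simpa using this
    · filter_upwards with n
      have : (0:ℝ) < 1/((n:ℝ)+1) := by positivity
      simp only [Set.mem_Ioi]
      linarith
  have hseq : Tendsto (fun n : ℕ => m (θ + 1/(n+1))) atTop (𝓝 L) := ht.comp hseqx
  have hseqθ : Tendsto (fun n : ℕ => θ + 1/((n:ℝ)+1)) atTop (𝓝 θ) := by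
    have h0 : Tendsto (fun n : ℕ => 1/((n:ℝ)+1)) atTop (𝓝 0) :=
      tendsto_one_div_add_atTop_nhds_zero_nat
    have := h0.const_add θ
    simpa using this
  have hsupp : ∀ (f : ℝ → ℝ), Continuous f →
      (∀ ψ : ℝ, Supp f ψ (m ψ)) → Supp f θ L := by
    intro f hcf hsf χ
    have hLHS : Tendsto (fun n : ℕ => f χ * Real.sin (χ - m (θ + 1/(n+1)))) atTop
        (𝓝 (f χ * Real.sin (χ - L))) := by
      apply Tendsto.const_mul
      exact (Real.continuous_sin.tendsto _).comp ((tendsto_const_nhds).sub hseq)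
    have hRHS : Tendsto (fun n : ℕ => f (θ + 1/(n+1)) * Real.sin ((θ + 1/(n+1)) - m (θ + 1/(n+1))))
        atTop (𝓝 (f θ * Real.sin (θ - L))) := by
      apply Tendsto.mul
      · exact (hcf.tendsto _).comp hseqθ
      · exact (Real.continuous_sin.tendsto _).comp (hseqθ.sub hseq)
    refine le_of_tendsto_of_tendsto' hLHS hRHS ?_
    intro n
    exact hsf (θ + 1/(n+1)) χ
  have hLIcc : L ∈ Icc (θ - π) θ := by
    constructor
    · have := (mphi_mem hex θ).1.1
      linarith
    · by_contra h
      push_neg at h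
      have hmin : θ + min ((L - θ)/2) (1/2) ∈ Ioo θ (θ + 1) := by
        constructor
        · have h1 : (0:ℝ) < min ((L - θ)/2) (1/2) := lt_min (by linarith) (by linarith)
          linarith
        · have h2 : min ((L - θ)/2) (1/2) ≤ 1/2 := min_le_right _ _
          linarith
      have h3 := hLle _ hmin
      have h4 : m (θ + min ((L - θ)/2) (1/2)) ≤ θ + min ((L - θ)/2) (1/2) :=
        (mphi_mem hex _).1.2
      have h5 : min ((L - θ)/2) (1/2) ≤ (L - θ)/2 := min_le_left _ _
      linarith
  have hLPhi : L ∈ Phi f₁ f₂ θ :=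
    ⟨hLIcc, hsupp f₁ hc₁ (fun ψ => (mphi_mem hex ψ).2.1),
      hsupp f₂ hc₂ (fun ψ => (mphi_mem hex ψ).2.2)⟩
  have hLeq : L = m θ := le_antisymm (mphi_le hex hLPhi) hLmθ
  rwa [hLeq] at ht

lemma cot_le_cot {a b : ℝ} (ha : 0 < a) (hab : a ≤ b) (hb : b < π) :
    Real.cos b / Real.sin b ≤ Real.cos a / Real.sin a := by
  have hsa : 0 < Real.sin a := Real.sin_pos_of_pos_of_lt_pi ha (lt_of_le_of_lt hab hb)
  have hsb : 0 < Real.sin b := Real.sin_pos_of_pos_of_lt_pi (lt_of_lt_of_le ha hab) hb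
  rw [div_le_div_iff₀ hsb hsa]
  have h2 : 0 ≤ Real.sin (b - a) :=
    Real.sin_nonneg_of_nonneg_of_le_pi (by linarith) (by linarith)
  rw [Real.sin_sub] at h2
  linarith

lemma log_sin_hasDerivAt {φ x : ℝ} (hx : Real.sin (x - φ) ≠ 0) :
    HasDerivAt (fun y => Real.log (Real.sin (y - φ)))
      (Real.cos (x - φ) / Real.sin (x - φ)) x := by
  have h1 : HasDerivAt (fun y : ℝ => y - φ) 1 x := (hasDerivAt_id x).sub_const φ
  have h2 : HasDerivAt (fun y : ℝ => Real.sin (y - φ)) (Real.cos (x - φ)) x := by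
    have h := (Real.hasDerivAt_sin (x - φ)).comp x h1; rw [mul_one] at h; exact h
  simpa using h2.log hx

lemma log_hasDeriv (hc₁ : Continuous f₁) (hc₂ : Continuous f₂)
    (hp₁ : ∀ x, 0 < f₁ x)
    (hex : ∀ θ : ℝ, ∃ φ ∈ Ioo (θ - π) θ, Supp f₁ θ φ ∧ Supp f₂ θ φ)
    (f : ℝ → ℝ) (hpf : ∀ x, 0 < f x)
    (hsf : ∀ ψ : ℝ, Supp f ψ (mphi f₁ f₂ ψ)) (θ : ℝ) :
    HasDerivWithinAt (fun x => Real.log (f x))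
      (-(Real.cos (θ - mphi f₁ f₂ θ) / Real.sin (θ - mphi f₁ f₂ θ))) (Ici θ) θ := by
  have hπ := Real.pi_gt_three
  set m := mphi f₁ f₂ with hm
  set φ := m θ with hφ
  have hIoo : φ ∈ Ioo (θ - π) θ := mphi_mem_Ioo hp₁ hex θ
  have ht0 : 0 < θ - φ := by have := hIoo.2; linarith
  have htπ : θ - φ < π := by have := hIoo.1; linarith
  have hsin : 0 < Real.sin (θ - φ) := Real.sin_pos_of_pos_of_lt_pi ht0 htπ
  have htm : Tendsto m (𝓝[>] θ) (𝓝 φ) := mphi_tendsto hc₁ hc₂ hp₁ hex θ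
  rw [hasDerivWithinAt_iff_tendsto_slope, Set.Ici_sdiff_left]
  have slope_eq : ∀ (g : ℝ → ℝ) (ψ : ℝ), slope g θ ψ = (g ψ - g θ) / (ψ - θ) := by
    intro g ψ
    rw [slope_def_field]
  -- upper bound function
  have hU : Tendsto (fun ψ => -(slope (fun x => Real.log (Real.sin (x - φ))) θ ψ)) (𝓝[>] θ)
      (𝓝 (-(Real.cos (θ - φ) / Real.sin (θ - φ)))) := by
    have h1 := (hasDerivAt_iff_tendsto_slope).1 (log_sin_hasDerivAt hsin.ne')
    have h2 : (𝓝[>] θ) ≤ (𝓝[≠] θ) :=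
      nhdsWithin_mono θ (fun x hx => ne_of_gt hx)
    exact (h1.mono_left h2).neg
  -- lower bound function
  have hW : Tendsto (fun ψ => -(Real.cos (θ - m ψ) / Real.sin (θ - m ψ))) (𝓝[>] θ)
      (𝓝 (-(Real.cos (θ - φ) / Real.sin (θ - φ)))) := by
    have hca : ContinuousAt (fun x => -(Real.cos (θ - x) / Real.sin (θ - x))) φ := by
      apply ContinuousAt.neg
      apply ContinuousAt.div
      · exact (Real.continuous_cos.comp (continuous_const.sub continuous_id)).continuousAt
      · exact (Real.continuous_sin.comp (continuous_const.sub continuous_id)).continuousAt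
      · exact hsin.ne'
    exact hca.tendsto.comp htm
  -- eventual bounds
  have hev1 : ∀ᶠ ψ in 𝓝[>] θ, slope (fun x => Real.log (f x)) θ ψ ≤
      -(slope (fun x => Real.log (Real.sin (x - φ))) θ ψ) := by
    have hIoo2 : Ioo θ (φ + π) ∈ 𝓝[>] θ :=
      Ioo_mem_nhdsGT_of_mem ⟨le_refl θ, by linarith⟩
    filter_upwards [hIoo2] with ψ hψ
    have hθψ : θ < ψ := hψ.1
    have hd : 0 < ψ - θ := by linarith
    have hsψ : 0 < Real.sin (ψ - φ) :=
      Real.sin_pos_of_pos_of_lt_pi (by linarith) (by linarith [hψ.2])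
    have hsupp := hsf θ ψ
    have hlog : Real.log (f ψ) + Real.log (Real.sin (ψ - φ)) ≤
        Real.log (f θ) + Real.log (Real.sin (θ - φ)) := by
      rw [← Real.log_mul (hpf ψ).ne' hsψ.ne', ← Real.log_mul (hpf θ).ne' hsin.ne']
      exact Real.log_le_log (mul_pos (hpf ψ) hsψ) hsupp
    rw [slope_eq, slope_eq, ← neg_div, div_le_div_iff₀ hd hd]
    nlinarith [hlog]
  have hev2 : ∀ᶠ ψ in 𝓝[>] θ, -(Real.cos (θ - m ψ) / Real.sin (θ - m ψ)) ≤
      slope (fun x => Real.log (f x)) θ ψ := by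
    have hIoo2 : Ioo θ (θ + 1) ∈ 𝓝[>] θ :=
      Ioo_mem_nhdsGT_of_mem ⟨le_refl θ, by linarith⟩
    have hevm : ∀ᶠ ψ in 𝓝[>] θ, m ψ < θ := htm.eventually_lt_const hIoo.2
    filter_upwards [hIoo2, hevm] with ψ hψ hmψ
    have hθψ : θ < ψ := hψ.1
    have hd : 0 < ψ - θ := by linarith
    have hφψ : φ ≤ m ψ := mphi_mono hp₁ hex hθψ (by linarith [hψ.2])
    have hIψ : m ψ ∈ Ioo (ψ - π) ψ := mphi_mem_Ioo hp₁ hex ψ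
    have hs1 : 0 < Real.sin (θ - m ψ) :=
      Real.sin_pos_of_pos_of_lt_pi (by linarith) (by linarith)
    have hs2 : 0 < Real.sin (ψ - m ψ) :=
      Real.sin_pos_of_pos_of_lt_pi (by linarith [hIψ.2]) (by linarith [hIψ.1])
    have hsupp := hsf ψ θ
    have hlog : Real.log (f θ) + Real.log (Real.sin (θ - m ψ)) ≤
        Real.log (f ψ) + Real.log (Real.sin (ψ - m ψ)) := by
      rw [← Real.log_mul (hpf θ).ne' hs1.ne', ← Real.log_mul (hpf ψ).ne' hs2.ne']
      exact Real.log_le_log (mul_pos (hpf θ) hs1) hsupp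
    -- MVT
    have hcont : ContinuousOn (fun x => Real.log (Real.sin (x - m ψ))) (Icc θ ψ) := by
      apply ContinuousOn.log
      · exact (Real.continuous_sin.comp (continuous_id.sub continuous_const)).continuousOn
      · intro x hx
        have : 0 < Real.sin (x - m ψ) :=
          Real.sin_pos_of_pos_of_lt_pi (by linarith [hx.1]) (by linarith [hx.2, hIψ.1])
        exact this.ne'
    obtain ⟨ξ, hξ, hslope⟩ := exists_hasDerivAt_eq_slope
      (fun x => Real.log (Real.sin (x - m ψ)))
      (fun x => Real.cos (x - m ψ) / Real.sin (x - m ψ)) hθψ hcont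
      (fun x hx => log_sin_hasDerivAt
        (Real.sin_pos_of_pos_of_lt_pi (by linarith [hx.1]) (by linarith [hx.2, hIψ.1])).ne')
    have hcot : Real.cos (ξ - m ψ) / Real.sin (ξ - m ψ) ≤
        Real.cos (θ - m ψ) / Real.sin (θ - m ψ) :=
      cot_le_cot (by linarith) (by linarith [hξ.1]) (by linarith [hξ.2, hIψ.1])
    rw [slope_eq]
    calc -(Real.cos (θ - m ψ) / Real.sin (θ - m ψ))
        ≤ -(Real.cos (ξ - m ψ) / Real.sin (ξ - m ψ)) := neg_le_neg hcot
      _ = (-(Real.log (Real.sin (ψ - m ψ)) - Real.log (Real.sin (θ - m ψ)))) / (ψ - θ) := by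
          rw [hslope, neg_div]
      _ ≤ (Real.log (f ψ) - Real.log (f θ)) / (ψ - θ) := by
          rw [div_le_div_iff₀ hd hd]
          nlinarith [hlog]
  exact tendsto_of_tendsto_of_tendsto_of_le_of_le' hW hU hev2 hev1


theorem core (hc₁ : Continuous f₁) (hc₂ : Continuous f₂)
    (hp₁ : ∀ x, 0 < f₁ x) (hp₂ : ∀ x, 0 < f₂ x)
    (hex : ∀ θ : ℝ, ∃ φ ∈ Ioo (θ - π) θ, Supp f₁ θ φ ∧ Supp f₂ θ φ) :
    ∀ θ θ' : ℝ, f₂ θ * f₁ θ' = f₂ θ' * f₁ θ := by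
  set D := fun x => Real.log (f₂ x) - Real.log (f₁ x) with hD
  have hDderiv : ∀ θ : ℝ, HasDerivWithinAt D 0 (Ici θ) θ := by
    intro θ
    have h1 := log_hasDeriv hc₁ hc₂ hp₁ hex f₁ hp₁ (fun ψ => (mphi_mem hex ψ).2.1) θ
    have h2 := log_hasDeriv hc₁ hc₂ hp₁ hex f₂ hp₂ (fun ψ => (mphi_mem hex ψ).2.2) θ
    have := h2.sub h1
    simp at this; exact this
  have hDcont : Continuous D :=
    (hc₂.log fun x => (hp₂ x).ne').sub (hc₁.log fun x => (hp₁ x).ne')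
  have hDeq : ∀ θ θ' : ℝ, θ ≤ θ' → D θ' = D θ := by
    intro θ θ' h
    rcases eq_or_lt_of_le h with rfl | hlt
    · rfl
    · exact constant_of_has_deriv_right_zero hDcont.continuousOn
        (fun x _ => hDderiv x) θ' (right_mem_Icc.2 hlt.le)
  have hDall : ∀ θ θ' : ℝ, D θ = D θ' := by
    intro θ θ'
    rcases le_total θ θ' with h | h
    · exact (hDeq θ θ' h).symm
    · exact hDeq θ' θ h
  intro θ θ'
  have h := hDall θ θ'
  have h2 : Real.log (f₂ θ * f₁ θ') = Real.log (f₂ θ' * f₁ θ) := by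
    rw [Real.log_mul (hp₂ θ).ne' (hp₁ θ').ne', Real.log_mul (hp₂ θ').ne' (hp₁ θ).ne']
    simp only [hD] at h
    linarith
  have h3 := congrArg Real.exp h2
  rwa [Real.exp_log (mul_pos (hp₂ θ) (hp₁ θ')), Real.exp_log (mul_pos (hp₂ θ') (hp₁ θ))] at h3

end Main
end RadonCore


open RadonAux RadonCore in
/-- A plane is Radon iff its anti-norm is a positive multiple of the norm. -/
theorem radon_iff_antinorm_multiple {X : Type*} [NormedAddCommGroup X] [NormedSpace ℝ X]
    (hdim : Module.finrank ℝ X = 2)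
    (ω : X →ₗ[ℝ] X →ₗ[ℝ] ℝ)
    (halt : ∀ x : X, ω x x = 0)
    (hnd : ∀ x : X, (∀ y : X, ω x y = 0) → x = 0) :
    (∀ v w : X, Birkhoff v w → Birkhoff w v) ↔
      ∃ c : ℝ, 0 < c ∧ ∀ y : X, antinorm ω y = c * ‖y‖ := by
  have hfin : FiniteDimensional ℝ X := Module.finite_of_finrank_pos (by rw [hdim]; norm_num)
  constructor
  · -- hard direction
    intro hRadon
    set b : Module.Basis (Fin 2) ℝ X := Module.finBasisOfFinrankEq ℝ X hdim with hb
    set c0 : ℝ := ω (b 0) (b 1) with hc0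
    have hc0ne : c0 ≠ 0 := by
      intro h
      have hflip : ∀ y, ω (b 0) y = 0 := by
        intro y
        have hy := b.sum_repr y
        rw [Fin.sum_univ_two] at hy
        rw [← hy]
        rw [map_add, map_smul, map_smul]
        rw [show ω (b 0) (b 1) = c0 from rfl]
        rw [halt (b 0), h]
        simp
      exact b.ne_zero 0 (hnd (b 0) hflip)
    set e0 : X := b 0 with he0
    set e1 : X := c0⁻¹ • b 1 with he1
    have hω01 : ω e0 e1 = 1 := by
      rw [he1, map_smul, smul_eq_mul, ← hc0, inv_mul_cancel₀ hc0ne]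
    have hω10 : ω e1 e0 = -1 := by rw [skew ω halt, hω01]
    have hω00 : ω e0 e0 = 0 := halt e0
    have hω11 : ω e1 e1 = 0 := halt e1
    set u : ℝ → X := fun θ => Real.cos θ • e0 + Real.sin θ • e1 with hu
    have hωuu : ∀ α β : ℝ, ω (u α) (u β) = Real.sin (β - α) := by
      intro α β
      simp only [hu, map_add, map_smul, LinearMap.add_apply, LinearMap.smul_apply,
        smul_eq_mul, hω01, hω10, hω00, hω11, Real.sin_sub]
      ring
    have hune : ∀ θ : ℝ, u θ ≠ 0 := by
      intro θ h
      have h1 : ω (u θ) e1 = Real.cos θ := by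
        rw [hu]
        simp only [map_add, map_smul, LinearMap.add_apply, LinearMap.smul_apply,
          smul_eq_mul, hω01, hω11]
        ring
      have h2 : ω e0 (u θ) = Real.sin θ := by
        rw [hu]
        simp only [map_add, map_smul, hω01, hω00, smul_eq_mul]
        ring
      rw [h] at h1 h2
      simp only [map_zero, LinearMap.zero_apply] at h1 h2
      nlinarith [Real.sin_sq_add_cos_sq θ, h1, h2]
    have hupos : ∀ θ : ℝ, 0 < ‖u θ‖ := fun θ => norm_pos_iff.2 (hune θ)
    have hNpos : ∀ θ : ℝ, 0 < antinorm ω (u θ) :=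
      fun θ => antinorm_pos ω halt hnd (hune θ)
    -- polar decomposition
    have hpolar : ∀ y : X, y ≠ 0 → ∃ R θ : ℝ, 0 < R ∧ y = R • u θ := by
      intro y hy
      set p : ℝ := b.repr y 0 with hp
      set q : ℝ := c0 * b.repr y 1 with hq
      have hydecomp : y = p • e0 + q • e1 := by
        have hy1 := b.sum_repr y
        rw [Fin.sum_univ_two] at hy1
        rw [← hy1, he0, he1, smul_smul, hq]
        congr 1
        rw [mul_comm c0 _, mul_assoc, mul_inv_cancel₀ hc0ne, mul_one]
      set z : ℂ := Complex.mk p q with hz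
      have hzre : z.re = p := rfl
      have hzim : z.im = q := rfl
      have hzne : z ≠ 0 := by
        intro h0
        apply hy
        have hp0 : p = 0 := by rw [← hzre, h0]; rfl
        have hq0 : q = 0 := by rw [← hzim, h0]; rfl
        rw [hydecomp, hp0, hq0, zero_smul, zero_smul, add_zero]
      set R : ℝ := ‖z‖ with hR
      have hRpos : 0 < R := by
        rw [hR]
        exact norm_pos_iff.2 hzne
      refine ⟨R, Complex.arg z, hRpos, ?_⟩
      have hcos : Real.cos (Complex.arg z) = p / R := by
        rw [Complex.cos_arg hzne, hzre, hR]
      have hsin : Real.sin (Complex.arg z) = q / R := by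
        rw [Complex.sin_arg, hzim, hR]
      rw [hydecomp, hu]
      simp only [smul_add, smul_smul, hcos, hsin]
      rw [mul_div_cancel₀ _ hRpos.ne', mul_div_cancel₀ _ hRpos.ne']
    -- the two radial functions
    set N : X → ℝ := antinorm ω with hN
    set f₁ : ℝ → ℝ := fun θ => ‖u θ‖⁻¹ with hf₁
    set f₂ : ℝ → ℝ := fun θ => (N (u θ))⁻¹ with hf₂
    have hucont : Continuous u := by
      rw [hu]
      exact (Real.continuous_cos.smul continuous_const).add
        (Real.continuous_sin.smul continuous_const)
    have hc₁ : Continuous f₁ := by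
      rw [hf₁]
      exact (hucont.norm).inv₀ (fun θ => (hupos θ).ne')
    have hc₂ : Continuous f₂ := by
      rw [hf₂, hN]
      exact ((antinorm_continuous ω).comp hucont).inv₀ (fun θ => (hNpos θ).ne')
    have hp₁ : ∀ θ : ℝ, 0 < f₁ θ := fun θ => inv_pos.2 (hupos θ)
    have hp₂ : ∀ θ : ℝ, 0 < f₂ θ := fun θ => inv_pos.2 (hNpos θ)
    -- existence of common support angles
    have hex : ∀ θ : ℝ, ∃ φ ∈ Set.Ioo (θ - Real.pi) θ, Supp f₁ θ φ ∧ Supp f₂ θ φ := by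
      intro θ
      obtain ⟨w, hw0, hBvw⟩ := exists_birkhoff hdim (hune θ)
      obtain ⟨R, φ₀, hRpos, rfl⟩ := hpolar w hw0
      have hBv : Birkhoff (u θ) (u φ₀) := by
        have h1 := birkhoff_smul_right R⁻¹ (inv_ne_zero hRpos.ne') hBvw
        rwa [smul_smul, inv_mul_cancel₀ hRpos.ne', one_smul] at h1
      have hupar : ∀ (x : ℝ) (k : ℤ), u (x + k * Real.pi) = ((-1:ℝ)^k) • u x := by
        intro x k
        rw [hu]
        simp only [Real.cos_add_int_mul_pi, Real.sin_add_int_mul_pi]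
        rw [he1]
        module
      have hnp : ∀ k : ℤ, θ - φ₀ ≠ k * Real.pi := by
        intro k hk
        have hφ₀eq : φ₀ = θ + (-k : ℤ) * Real.pi := by push_cast; linarith
        have h2 : u φ₀ = ((-1:ℝ)^(-k : ℤ)) • u θ := by rw [hφ₀eq, hupar θ (-k)]
        rw [h2] at hBv
        exact birkhoff_not_self (hune θ)
          (c := ((-1:ℝ)^(-k:ℤ))) (zpow_ne_zero _ (by norm_num)) hBv
      have hπ0 : (0:ℝ) < Real.pi := Real.pi_pos
      set d : ℝ := θ - φ₀ with hd
      set k : ℤ := ⌈d / Real.pi⌉ with hk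
      have h1 : d / Real.pi ≤ (k:ℝ) := Int.le_ceil _
      have h2 : (k:ℝ) < d / Real.pi + 1 := Int.ceil_lt_add_one _
      set φ : ℝ := φ₀ + ((k:ℝ) - 1) * Real.pi with hφdef
      have hdk : d ≤ (k:ℝ) * Real.pi := by
        rw [div_le_iff₀ hπ0] at h1
        linarith
      have hdk2 : ((k:ℝ) - 1) * Real.pi < d := by
        have h3 : d / Real.pi > (k:ℝ) - 1 := by linarith
        calc ((k:ℝ) - 1) * Real.pi < (d / Real.pi) * Real.pi :=
              mul_lt_mul_of_pos_right (by linarith) hπ0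
          _ = d := by field_simp
      have hdklt : d < (k:ℝ) * Real.pi := lt_of_le_of_ne hdk (by
        intro h
        exact (hnp k) (by rw [hd] at h; exact h))
      have hθφ1 : 0 < θ - φ := by rw [hφdef]; push_cast; linarith
      have hθφ2 : θ - φ < Real.pi := by rw [hφdef]; push_cast; linarith
      have huφ : u φ = ((-1:ℝ)^((k:ℤ)-1)) • u φ₀ := by
        rw [hφdef]
        have : φ₀ + ((k:ℝ) - 1) * Real.pi = φ₀ + ((k - 1 : ℤ) : ℝ) * Real.pi := by
          push_cast; ring
        rw [this, hupar φ₀ (k-1)]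
      have hs : ((-1:ℝ)^((k:ℤ)-1)) ≠ 0 := zpow_ne_zero _ (by norm_num)
      have hBθφ : Birkhoff (u θ) (u φ) := by
        rw [huφ]
        exact birkhoff_smul_right _ hs hBv
      have hBφθ : Birkhoff (u φ) (u θ) := hRadon _ _ hBθφ
      have hsinθφ : 0 < Real.sin (θ - φ) := Real.sin_pos_of_pos_of_lt_pi hθφ1 hθφ2
      have hE1 : Real.sin (θ - φ) = ‖u θ‖ * N (u φ) := by
        have h3 := eq_of_birkhoff hdim ω halt hnd hBθφ
        rw [hωuu θ φ, show φ - θ = -(θ - φ) by ring, Real.sin_neg, abs_neg,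
          abs_of_pos hsinθφ] at h3
        exact h3
      have hE2 : Real.sin (θ - φ) = ‖u φ‖ * N (u θ) := by
        have h3 := eq_of_birkhoff hdim ω halt hnd hBφθ
        rw [hωuu φ θ, abs_of_pos hsinθφ] at h3
        exact h3
      refine ⟨φ, ⟨by linarith, by linarith⟩, ?_, ?_⟩
      · intro ψ
        have hb1 : Real.sin (ψ - φ) ≤ ‖u ψ‖ * N (u φ) := by
          have h4 := abs_omega_le ω (u ψ) (u φ)
          rw [hωuu ψ φ] at h4
          calc Real.sin (ψ - φ) ≤ |Real.sin (φ - ψ)| := by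
                rw [show φ - ψ = -(ψ - φ) by ring, Real.sin_neg, abs_neg]
                exact le_abs_self _
            _ ≤ ‖u ψ‖ * N (u φ) := h4
        have hf : f₁ θ * Real.sin (θ - φ) = N (u φ) := by
          rw [hf₁]
          simp only
          rw [hE1, ← mul_assoc, inv_mul_cancel₀ (hupos θ).ne', one_mul]
        rw [hf, hf₁]
        simp only
        rw [mul_comm, ← div_eq_mul_inv, div_le_iff₀ (hupos ψ)]
        calc Real.sin (ψ - φ) ≤ ‖u ψ‖ * N (u φ) := hb1
          _ = N (u φ) * ‖u ψ‖ := mul_comm _ _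
      · intro ψ
        have hb1 : Real.sin (ψ - φ) ≤ ‖u φ‖ * N (u ψ) := by
          have h4 := abs_omega_le ω (u φ) (u ψ)
          rw [hωuu φ ψ] at h4
          exact (le_abs_self _).trans h4
        have hf : f₂ θ * Real.sin (θ - φ) = ‖u φ‖ := by
          rw [hf₂]
          simp only
          rw [hE2, mul_comm ‖u φ‖ (N (u θ)), ← mul_assoc,
            inv_mul_cancel₀ (hNpos θ).ne', one_mul]
        rw [hf, hf₂]
        simp only
        rw [mul_comm, ← div_eq_mul_inv, div_le_iff₀ (hNpos ψ)]
        calc Real.sin (ψ - φ) ≤ ‖u φ‖ * N (u ψ) := hb1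
          _ = ‖u φ‖ * N (u ψ) := rfl
    have hcore := core hc₁ hc₂ hp₁ hp₂ hex
    refine ⟨N (u 0) * ‖u 0‖⁻¹, mul_pos (hNpos 0) (inv_pos.2 (hupos 0)), ?_⟩
    intro y
    rcases eq_or_ne y 0 with rfl | hy
    · simp only [norm_zero, mul_zero]
      exact antinorm_zero ω
    obtain ⟨R, θ, hRpos, rfl⟩ := hpolar y hy
    have hratio := hcore θ 0
    have hq : N (u 0) * ‖u θ‖ = N (u θ) * ‖u 0‖ := by
      rw [hf₂, hf₁] at hratio
      simp only at hratio
      field_simp [(hNpos θ).ne', (hNpos 0).ne', (hupos θ).ne', (hupos 0).ne'] at hratio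
      nlinarith [hratio]
    have hNuθ : N (u θ) = N (u 0) * ‖u 0‖⁻¹ * ‖u θ‖ := by
      field_simp [(hupos 0).ne']
      nlinarith [hq]
    rw [hN] at hNuθ ⊢
    rw [antinorm_smul, hNuθ, norm_smul, Real.norm_eq_abs, abs_of_pos hRpos]
    ring
  · -- easy direction
    rintro ⟨c, hc, hNmul⟩ v w hB
    rcases eq_or_ne v 0 with rfl | hv
    · intro l; simp
    rcases eq_or_ne w 0 with rfl | hw
    · intro l; simp
    have h1 := eq_of_birkhoff hdim ω halt hnd hB
    apply birkhoff_of_eq ω halt hnd hv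
    rw [hNmul v, show |ω w v| = |ω v w| from by rw [skew ω halt w v, abs_neg], h1, hNmul w]
    ring
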